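/- For u, v in the open unit ball of ℝⁿ, the trace of the positive square root of B(u) B(v)² B(u) equals 2γ_{u⊕v} + n − 1. -/

import Mathlib

open scoped RealInnerProductSpace

noncomputable def gam {n : ℕ} (v : EuclideanSpace ℝ (Fin n)) : ℝ :=
  1 / Real.sqrt (1 - ‖v‖ ^ 2)

noncomputable def eAdd {n : ℕ} (u v : EuclideanSpace ℝ (Fin n)) :
    EuclideanSpace ℝ (Fin n) :=
  (1 / (1 + ⟪u, v⟫)) •
    (u + (1 / gam u) • v + ((gam u / (1 + gam u)) * ⟪u, v⟫) • u)

noncomputable def boost {n : ℕ} (v : EuclideanSpace ℝ (Fin n)) :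
    Matrix (Unit ⊕ Fin n) (Unit ⊕ Fin n) ℝ :=
  Matrix.fromBlocks
    (Matrix.of fun _ _ => gam v)
    (Matrix.of fun _ j => gam v * v j)
    (Matrix.of fun i _ => gam v * v i)
    (1 + Matrix.of fun i j => (gam v) ^ 2 / (1 + gam v) * v i * v j)


namespace TSB

variable {n : ℕ}

lemma one_sub_norm_pos (x : EuclideanSpace ℝ (Fin n)) (hx : ‖x‖ < 1) : 0 < 1 - ‖x‖ ^ 2 := by
  nlinarith [norm_nonneg x]

lemma gam_pos (x : EuclideanSpace ℝ (Fin n)) (hx : ‖x‖ < 1) : 0 < gam x := by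
  unfold gam
  exact div_pos one_pos (Real.sqrt_pos.2 (one_sub_norm_pos x hx))

lemma one_le_gam (x : EuclideanSpace ℝ (Fin n)) (hx : ‖x‖ < 1) : 1 ≤ gam x := by
  unfold gam
  rw [le_div_iff₀ (Real.sqrt_pos.2 (one_sub_norm_pos x hx))]
  rw [one_mul]
  calc Real.sqrt (1 - ‖x‖ ^ 2) ≤ Real.sqrt 1 := by
        apply Real.sqrt_le_sqrt; nlinarith [norm_nonneg x]
    _ = 1 := Real.sqrt_one

lemma gam_sq (x : EuclideanSpace ℝ (Fin n)) (hx : ‖x‖ < 1) :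
    (gam x) ^ 2 * (1 - ‖x‖ ^ 2) = 1 := by
  have h := one_sub_norm_pos x hx
  unfold gam
  rw [div_pow, one_pow, Real.sq_sqrt h.le]
  field_simp

lemma norm_sq_sum (x : EuclideanSpace ℝ (Fin n)) : ‖x‖ ^ 2 = ∑ i, x i * x i := by
  rw [← real_inner_self_eq_norm_sq]
  simp only [PiLp.inner_apply, RCLike.inner_apply, conj_trivial, mul_comm]

lemma inner_sum (u v : EuclideanSpace ℝ (Fin n)) : ⟪u, v⟫ = ∑ i, u i * v i := by
  simp [PiLp.inner_apply, mul_comm]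

noncomputable def rvec (x : Fin n → ℝ) : Matrix Unit (Fin n) ℝ := Matrix.of fun _ j => x j
noncomputable def cvec (x : Fin n → ℝ) : Matrix (Fin n) Unit ℝ := Matrix.of fun i _ => x i
noncomputable def om (x y : Fin n → ℝ) : Matrix (Fin n) (Fin n) ℝ := Matrix.of fun i j => x i * y j

lemma rvec_mul_cvec (x y : Fin n → ℝ) :
    rvec x * cvec y = (∑ k, x k * y k) • (1 : Matrix Unit Unit ℝ) := by
  ext i j; simp [rvec, cvec, Matrix.mul_apply, Matrix.one_apply]
lemma rvec_mul_om (x y z : Fin n → ℝ) : rvec x * om y z = (∑ k, x k * y k) • rvec z := by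
  ext i j; simp [rvec, om, Matrix.mul_apply, Finset.sum_mul, Finset.mul_sum]; ring_nf
  exact Finset.sum_congr rfl fun _ _ => by ring
lemma om_mul_cvec (x y z : Fin n → ℝ) : om x y * cvec z = (∑ k, y k * z k) • cvec x := by
  ext i j; simp only [om, cvec, Matrix.mul_apply, Matrix.smul_apply, Matrix.of_apply, smul_eq_mul,
    mul_assoc, ← Finset.mul_sum]
  ring
lemma cvec_mul_rvec (x y : Fin n → ℝ) : cvec x * rvec y = om x y := by
  ext i j; simp [cvec, rvec, om, Matrix.mul_apply]
lemma om_mul_om (x y z w : Fin n → ℝ) : om x y * om z w = (∑ k, y k * z k) • om x w := by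
  ext i j
  simp only [om, Matrix.mul_apply, Matrix.smul_apply, Matrix.of_apply, smul_eq_mul]
  rw [Finset.sum_congr rfl
    (fun k _ => show x i * y k * (z k * w j) = x i * w j * (y k * z k) by ring), ← Finset.mul_sum]
  ring

noncomputable def F (u v : Fin n → ℝ) (a b₁ b₂ c₁ c₂ d e₁₁ e₁₂ e₂₁ e₂₂ : ℝ) :
    Matrix (Unit ⊕ Fin n) (Unit ⊕ Fin n) ℝ :=
  Matrix.fromBlocks (a • 1) (b₁ • rvec u + b₂ • rvec v) (c₁ • cvec u + c₂ • cvec v)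
    (d • 1 + e₁₁ • om u u + e₁₂ • om u v + e₂₁ • om v u + e₂₂ • om v v)

lemma F_mul (u v : Fin n → ℝ) (p q t : ℝ)
    (hp : ∑ k, u k * u k = p) (hq : ∑ k, v k * v k = q) (ht : ∑ k, u k * v k = t)
    (a b₁ b₂ c₁ c₂ d e₁₁ e₁₂ e₂₁ e₂₂ a' b₁' b₂' c₁' c₂' d' e₁₁' e₁₂' e₂₁' e₂₂' : ℝ) :
    F u v a b₁ b₂ c₁ c₂ d e₁₁ e₁₂ e₂₁ e₂₂ * F u v a' b₁' b₂' c₁' c₂' d' e₁₁' e₁₂' e₂₁' e₂₂' =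
    F u v
      (a * a' + (b₁ * c₁' * p + (b₁ * c₂' + b₂ * c₁') * t + b₂ * c₂' * q))
      (a * b₁' + b₁ * d' + b₁ * (e₁₁' * p + e₂₁' * t) + b₂ * (e₁₁' * t + e₂₁' * q))
      (a * b₂' + b₂ * d' + b₁ * (e₁₂' * p + e₂₂' * t) + b₂ * (e₁₂' * t + e₂₂' * q))
      (c₁ * a' + d * c₁' + e₁₁ * (c₁' * p + c₂' * t) + e₁₂ * (c₁' * t + c₂' * q))
      (c₂ * a' + d * c₂' + e₂₁ * (c₁' * p + c₂' * t) + e₂₂ * (c₁' * t + c₂' * q))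
      (d * d')
      (c₁ * b₁' + d * e₁₁' + d' * e₁₁ + e₁₁ * (e₁₁' * p + e₂₁' * t) + e₁₂ * (e₁₁' * t + e₂₁' * q))
      (c₁ * b₂' + d * e₁₂' + d' * e₁₂ + e₁₁ * (e₁₂' * p + e₂₂' * t) + e₁₂ * (e₁₂' * t + e₂₂' * q))
      (c₂ * b₁' + d * e₂₁' + d' * e₂₁ + e₂₁ * (e₁₁' * p + e₂₁' * t) + e₂₂ * (e₁₁' * t + e₂₁' * q))
      (c₂ * b₂' + d * e₂₂' + d' * e₂₂ + e₂₁ * (e₁₂' * p + e₂₂' * t) + e₂₂ * (e₁₂' * t + e₂₂' * q)) := by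
  have hvu : ∑ k, v k * u k = t := by
    rw [← ht]; exact Finset.sum_congr rfl fun k _ => mul_comm _ _
  subst hp hq ht
  unfold F
  rw [Matrix.fromBlocks_multiply]
  refine Matrix.fromBlocks_inj.2 ⟨?_, ?_, ?_, ?_⟩ <;>
  · simp only [Matrix.add_mul, Matrix.mul_add, Matrix.smul_mul, Matrix.mul_smul, Matrix.mul_one,
      Matrix.one_mul, rvec_mul_cvec, rvec_mul_om, om_mul_cvec, cvec_mul_rvec, om_mul_om,
      smul_smul, hvu]
    module

lemma F_congr {u v : Fin n → ℝ}
    {a b₁ b₂ c₁ c₂ d e₁₁ e₁₂ e₂₁ e₂₂ a' b₁' b₂' c₁' c₂' d' e₁₁' e₁₂' e₂₁' e₂₂' : ℝ}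
    (h1 : a = a') (h2 : b₁ = b₁') (h3 : b₂ = b₂') (h4 : c₁ = c₁') (h5 : c₂ = c₂')
    (h6 : d = d') (h7 : e₁₁ = e₁₁') (h8 : e₁₂ = e₁₂') (h9 : e₂₁ = e₂₁') (h10 : e₂₂ = e₂₂') :
    F u v a b₁ b₂ c₁ c₂ d e₁₁ e₁₂ e₂₁ e₂₂ = F u v a' b₁' b₂' c₁' c₂' d' e₁₁' e₁₂' e₂₁' e₂₂' := by
  rw [h1, h2, h3, h4, h5, h6, h7, h8, h9, h10]

lemma F_sq (u v : Fin n → ℝ) (p q t γ α β c : ℝ)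
    (hps : ∑ k, u k * u k = p) (hqs : ∑ k, v k * v k = q) (hts : ∑ k, u k * v k = t)
    (h1γ : (1:ℝ) + γ ≠ 0)
    (hc : c * (1 + γ) = γ^2)
    (hS : γ^2 * (1 - (α^2*p + 2*α*β*t + β^2*q)) = 1) :
    F u v γ (γ*α) (γ*β) (γ*α) (γ*β) 1 (c*(α*α)) (c*(α*β)) (c*(β*α)) (c*(β*β)) *
    F u v γ (γ*α) (γ*β) (γ*α) (γ*β) 1 (c*(α*α)) (c*(α*β)) (c*(β*α)) (c*(β*β)) =
    F u v (2*γ^2-1) (2*γ^2*α) (2*γ^2*β) (2*γ^2*α) (2*γ^2*β) 1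
      (2*γ^2*(α*α)) (2*γ^2*(α*β)) (2*γ^2*(β*α)) (2*γ^2*(β*β)) := by
  have h2 : (c * (α^2*p + 2*α*β*t + β^2*q) - (γ - 1)) * (1 + γ) = 0 := by
    linear_combination (α^2*p + 2*α*β*t + β^2*q) * hc - hS
  have hcS : c * (α^2*p + 2*α*β*t + β^2*q) = γ - 1 := by
    rcases mul_eq_zero.mp h2 with h | h
    · linarith [sub_eq_zero.mp h]
    · exact absurd h h1γ
  rw [F_mul u v p q t hps hqs hts]
  refine F_congr ?_ ?_ ?_ ?_ ?_ ?_ ?_ ?_ ?_ ?_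
  · linear_combination -hS
  · linear_combination (γ*α)*hcS
  · linear_combination (γ*β)*hcS
  · linear_combination (γ*α)*hcS
  · linear_combination (γ*β)*hcS
  · ring
  · linear_combination (α*α*c)*hcS + (α*α)*hc
  · linear_combination (α*β*c)*hcS + (α*β)*hc
  · linear_combination (β*α*c)*hcS + (β*α)*hc
  · linear_combination (β*β*c)*hcS + (β*β)*hc

lemma boost_eq_F (u v x : EuclideanSpace ℝ (Fin n)) (α β : ℝ)
    (hx : ∀ j, x j = α * u j + β * v j) :
    boost x = F u v (gam x) (gam x * α) (gam x * β) (gam x * α) (gam x * β) 1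
      ((gam x) ^ 2 / (1 + gam x) * (α * α)) ((gam x) ^ 2 / (1 + gam x) * (α * β))
      ((gam x) ^ 2 / (1 + gam x) * (β * α)) ((gam x) ^ 2 / (1 + gam x) * (β * β)) := by
  unfold boost F
  refine Matrix.fromBlocks_inj.2 ⟨?_, ?_, ?_, ?_⟩
  · ext i j
    simp [Matrix.one_apply]
  · ext i j
    simp only [Matrix.of_apply, Matrix.add_apply, Matrix.smul_apply, rvec, smul_eq_mul]
    rw [hx j]; ring
  · ext i j
    simp only [Matrix.of_apply, Matrix.add_apply, Matrix.smul_apply, cvec, smul_eq_mul]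
    rw [hx i]; ring
  · ext i j
    simp only [Matrix.of_apply, Matrix.add_apply, Matrix.smul_apply, om, smul_eq_mul,
      Matrix.one_apply, one_smul]
    rw [hx i, hx j]; ring

open Matrix
lemma boost_posSemidef (x : EuclideanSpace ℝ (Fin n)) (hx : ‖x‖ < 1) :
    (boost x).PosSemidef := by
  have hγ1 : 1 ≤ gam x := one_le_gam x hx
  have hγ0 : 0 < gam x := gam_pos x hx
  have h1γ : 0 < 1 + gam x := by linarith
  refine Matrix.PosSemidef.of_dotProduct_mulVec_nonneg ?_ ?_
  · rw [Matrix.IsHermitian]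
    ext i j
    rcases i with i | i <;> rcases j with j | j <;>
      simp [boost, Matrix.conjTranspose_apply, Matrix.one_apply, eq_comm] <;> ring
  · intro y
    set s := y (Sum.inl ()) with hs
    set r := ∑ i, x i * y (Sum.inr i) with hr
    set Y := ∑ i, y (Sum.inr i) * y (Sum.inr i) with hY
    set X := ‖x‖ ^ 2 with hX
    have hmv1 : (boost x *ᵥ y) (Sum.inl ()) = gam x * s + gam x * r := by
      simp only [Matrix.mulVec, dotProduct, Fintype.sum_sum_type, Finset.univ_unique,
        Finset.sum_singleton, boost, Matrix.fromBlocks_apply₁₁, Matrix.fromBlocks_apply₁₂,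
        Matrix.of_apply, Finset.mul_sum, hr, hs]
      ring_nf
    have hmv2 : ∀ i, (boost x *ᵥ y) (Sum.inr i) = gam x * x i * s
        + y (Sum.inr i) + (gam x)^2/(1+gam x) * x i * r := by
      intro i
      simp only [Matrix.mulVec, dotProduct, Fintype.sum_sum_type, Finset.univ_unique,
        Finset.sum_singleton, boost, Matrix.fromBlocks_apply₂₁, Matrix.fromBlocks_apply₂₂,
        Matrix.of_apply, Matrix.add_apply, Matrix.one_apply, ite_mul, one_mul, zero_mul, add_mul,
        Finset.sum_add_distrib, Finset.sum_ite_eq, Finset.mem_univ, if_true, Finset.mul_sum,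
        hr, hs]
      ring_nf
    have hform : dotProduct (star y) (boost x *ᵥ y) =
        gam x * s * s + 2 * gam x * s * r + Y + (gam x)^2/(1+gam x) * r * r := by
      simp only [star_trivial, dotProduct, Fintype.sum_sum_type, Finset.univ_unique,
        Finset.sum_singleton]
      rw [hmv1]
      rw [Finset.sum_congr rfl fun i _ => by rw [hmv2 i]]
      simp only [mul_add, Finset.sum_add_distrib]
      have hd : y (Sum.inl default) = s := rfl
      rw [hd, Finset.sum_congr rfl (fun i _ => show y (Sum.inr i) * (gam x * x i * s)
          = (gam x * s) * (x i * y (Sum.inr i)) by ring), ← Finset.mul_sum,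
        Finset.sum_congr rfl (fun i _ => show y (Sum.inr i) * (gam x ^ 2 / (1 + gam x) * x i * r)
          = (gam x ^ 2 / (1 + gam x) * r) * (x i * y (Sum.inr i)) by ring), ← Finset.mul_sum,
        ← hr, ← hY]
      ring
    rw [hform]
    have hgs : (gam x) ^ 2 * (1 - X) = 1 := gam_sq x hx
    have hCS : r ^ 2 ≤ X * Y := by
      have h := Finset.sum_mul_sq_le_sq_mul_sq Finset.univ (fun i => x i) (fun i => y (Sum.inr i))
      have e1 : ∑ i, (x i) ^ 2 = X := by
        rw [hX, norm_sq_sum]; exact Finset.sum_congr rfl fun i _ => pow_two _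
      have e2 : ∑ i, (y (Sum.inr i)) ^ 2 = Y := by
        rw [hY]; exact Finset.sum_congr rfl fun i _ => pow_two _
      rw [e1, e2] at h
      exact h
    have hY0 : 0 ≤ Y := Finset.sum_nonneg fun i _ => mul_self_nonneg _
    have hc : (gam x)^2/(1+gam x) * (1 + gam x) = (gam x)^2 := by field_simp
    have expand : (gam x * s * s + 2 * gam x * s * r + Y + (gam x)^2/(1+gam x) * r * r)
        * ((1 + gam x) * gam x)
        = (1 + gam x) * (gam x)^2 * (s + r)^2 + (1 + gam x) * Y + (gam x)^2 * (X * Y - r^2) := by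
      linear_combination (gam x * r^2) * hc + Y * hgs
    have hQpos : 0 ≤ (gam x * s * s + 2 * gam x * s * r + Y + (gam x)^2/(1+gam x) * r * r)
        * ((1 + gam x) * gam x) := by
      rw [expand]
      have t1 : 0 ≤ (1 + gam x) * (gam x)^2 * (s + r)^2 := by positivity
      have t2 : 0 ≤ (1 + gam x) * Y := mul_nonneg h1γ.le hY0
      have t3 : 0 ≤ (gam x)^2 * (X * Y - r^2) := mul_nonneg (sq_nonneg _) (by linarith)
      linarith
    exact (mul_nonneg_iff_of_pos_right (mul_pos h1γ hγ0)).1 hQpos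


lemma trace_boost (x : EuclideanSpace ℝ (Fin n)) (hx : ‖x‖ < 1) :
    (boost x).trace = 2 * gam x + (n : ℝ) - 1 := by
  have hγ1 : 1 ≤ gam x := one_le_gam x hx
  have h1γ : (1 + gam x) ≠ 0 := by linarith
  have hS : (gam x)^2 * (1 - ∑ i, x i * x i) = 1 := by
    rw [← norm_sq_sum]; exact gam_sq x hx
  have key : (gam x)^2/(1+gam x) * (∑ i, x i * x i) = gam x - 1 := by
    field_simp
    linear_combination -hS + gam x ^ 2 * (Finset.sum_congr rfl fun i _ => pow_two (x i) :
      ∑ i, x i ^ 2 = ∑ i, x i * x i)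
  rw [Matrix.trace, Fintype.sum_sum_type]
  simp only [Matrix.diag_apply, boost, Matrix.fromBlocks_apply₁₁, Matrix.fromBlocks_apply₂₂,
    Matrix.of_apply, Matrix.add_apply, Matrix.one_apply_eq, Finset.univ_unique,
    Finset.sum_singleton, Finset.sum_add_distrib, Finset.sum_const, Finset.card_univ,
    Fintype.card_fin, nsmul_eq_mul, mul_one]
  rw [Finset.sum_congr rfl (fun i _ => show (gam x)^2/(1+gam x) * x i * x i
      = (gam x)^2/(1+gam x) * (x i * x i) by ring), ← Finset.mul_sum, key]
  norm_num [Finset.card_singleton]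
  ring

end TSB


set_option maxHeartbeats 4000000 in
open TSB in
theorem trace_sqrt_boost {n : ℕ} (u v : EuclideanSpace ℝ (Fin n))
    (hu : ‖u‖ < 1) (hv : ‖v‖ < 1)
    (S : Matrix (Unit ⊕ Fin n) (Unit ⊕ Fin n) ℝ) (hS : S.PosSemidef)
    (hSsq : S ^ 2 = boost u * boost v ^ 2 * boost u) :
    S.trace = 2 * gam (eAdd u v) + (n : ℝ) - 1 := by
  have hg1 : 1 ≤ gam u := one_le_gam u hu
  have hh1 : 1 ≤ gam v := one_le_gam v hv
  have hg0 : 0 < gam u := by linarith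
  have hh0 : 0 < gam v := by linarith
  have hgs : (gam u)^2 * (1 - ‖u‖^2) = 1 := gam_sq u hu
  have hhs : (gam v)^2 * (1 - ‖v‖^2) = 1 := gam_sq v hv
  have hp2 : ‖u‖^2 = 1 - 1/(gam u)^2 := by field_simp; linear_combination -hgs
  have hq2 : ‖v‖^2 = 1 - 1/(gam v)^2 := by field_simp; linear_combination -hhs
  have ht1 : 0 < 1 + ⟪u, v⟫ := by
    have h := abs_real_inner_le_norm u v
    have := abs_le.1 h
    nlinarith [norm_nonneg u, norm_nonneg v]
  have hts : ∑ k, u k * v k = ⟪u, v⟫ := (inner_sum u v).symm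
  have hps : ∑ k, u k * u k = ‖u‖^2 := (norm_sq_sum u).symm
  have hqs : ∑ k, v k * v k = ‖v‖^2 := (norm_sq_sum v).symm
  -- eAdd as a linear combination
  set t := ⟪u, v⟫ with htdef
  set wa : ℝ := (1/(1+t)) * (1 + gam u/(1+gam u)*t) with hwa
  set wb : ℝ := (1/(1+t)) * (1/gam u) with hwb
  have hw : ∀ j, eAdd u v j = wa * u j + wb * v j := by
    intro j
    simp only [eAdd, PiLp.smul_apply, PiLp.add_apply, smul_eq_mul, hwa, hwb, ← htdef]
    ring
  have hwn : ‖eAdd u v‖^2 = wa^2 * ‖u‖^2 + 2*wa*wb*t + wb^2 * ‖v‖^2 := by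
    rw [norm_sq_sum]
    calc ∑ i, eAdd u v i * eAdd u v i
        = ∑ i, (wa^2*(u i * u i) + (2*wa*wb*(u i * v i) + wb^2*(v i * v i))) :=
          Finset.sum_congr rfl fun i _ => by rw [hw i]; ring
      _ = wa^2 * ‖u‖^2 + 2*wa*wb*t + wb^2 * ‖v‖^2 := by
          rw [Finset.sum_add_distrib, Finset.sum_add_distrib, ← Finset.mul_sum, ← Finset.mul_sum,
            ← Finset.mul_sum, hps, hts, hqs]
          ring
  have h1g : (1 + gam u) ≠ 0 := by linarith
  have h1h : (1 + gam v) ≠ 0 := by linarith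
  have hq0 : 1 - ‖eAdd u v‖^2 = (1 - ‖u‖^2) * (1 - ‖v‖^2) / (1+t)^2 := by
    rw [hwn, hp2, hq2, hwa, hwb]
    field_simp [ht1.ne', hg0.ne', hh0.ne', h1g, h1h]
    ring
  have hwlt : ‖eAdd u v‖ < 1 := by
    have hpos : 0 < (1 - ‖u‖^2) * (1 - ‖v‖^2) / (1+t)^2 := by
      have := one_sub_norm_pos u hu
      have := one_sub_norm_pos v hv
      positivity
    nlinarith [norm_nonneg (eAdd u v), hq0]
  have hk : gam (eAdd u v) = gam u * gam v * (1 + t) := by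
    have hknn : 0 ≤ gam (eAdd u v) := (gam_pos _ hwlt).le
    have h1 := gam_sq _ hwlt
    rw [hq0, hp2, hq2] at h1
    have hsq2 : (gam (eAdd u v))^2 = (gam u * gam v * (1 + t))^2 := by
      field_simp [ht1.ne', hg0.ne', hh0.ne', h1g, h1h] at h1
      linear_combination h1
    rw [← Real.sqrt_sq hknn, hsq2, Real.sqrt_sq (by positivity)]
  -- main matrix identity
  have hbu := boost_eq_F u v u 1 0 (fun j => by ring)
  have hbv := boost_eq_F u v v 0 1 (fun j => by ring)
  have hbw := boost_eq_F u v (eAdd u v) wa wb hw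
  have hfs : ∀ a b : ℝ, a = b → a = b := fun a b h => h
  have hKey : boost (eAdd u v) ^ 2 = boost u * boost v ^ 2 * boost u := by
    have sv : boost v * boost v = F u v (2*(gam v)^2-1) (2*(gam v)^2*0) (2*(gam v)^2*1)
        (2*(gam v)^2*0) (2*(gam v)^2*1) 1 (2*(gam v)^2*(0*0)) (2*(gam v)^2*(0*1))
        (2*(gam v)^2*(1*0)) (2*(gam v)^2*(1*1)) := by
      rw [hbv]
      exact F_sq u v _ _ t (gam v) 0 1 _ hps hqs hts h1h (by field_simp)
        (by linear_combination hhs)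
    have s2 : boost u * (boost v * boost v) = F u v
        (gam u*(2*(gam v)^2-1) + 2*gam u*(gam v)^2*t) (gam u) (2*gam u*(gam v)^2*(1+t))
        (gam u*(2*(gam v)^2-1) + 2*(gam u)^2/(1+gam u)*(gam v)^2*t) (2*(gam v)^2) 1
        ((gam u)^2/(1+gam u)) (2*gam u*(gam v)^2 + 2*(gam u)^2/(1+gam u)*(gam v)^2*t)
        0 (2*(gam v)^2) := by
      rw [sv, hbu, F_mul u v (‖u‖^2) (‖v‖^2) t hps hqs hts]
      refine F_congr ?_ ?_ ?_ ?_ ?_ ?_ ?_ ?_ ?_ ?_ <;>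
      · try simp only [hp2, hq2]
        try field_simp
        try ring
        try simp
    have s3 : boost u * (boost v * boost v) * boost u = F u v
        (2*(gam u)^2*(gam v)^2*(1+t)^2 - 1)
        (2*(gam u)^2*(gam v)^2*(1+t)*(1+gam u+gam u*t)/(1+gam u))
        (2*gam u*(gam v)^2*(1+t))
        (2*(gam u)^2*(gam v)^2*(1+t)*(1+gam u+gam u*t)/(1+gam u))
        (2*gam u*(gam v)^2*(1+t))
        1
        (2*(gam u)^2*(gam v)^2*(1+gam u+gam u*t)^2/(1+gam u)^2)
        (2*gam u*(gam v)^2*(1+gam u+gam u*t)/(1+gam u))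
        (2*gam u*(gam v)^2*(1+gam u+gam u*t)/(1+gam u))
        (2*(gam v)^2) := by
      rw [s2, hbu, F_mul u v (‖u‖^2) (‖v‖^2) t hps hqs hts]
      refine F_congr ?_ ?_ ?_ ?_ ?_ ?_ ?_ ?_ ?_ ?_ <;>
      · try simp only [hp2, hq2]
        try field_simp
        try ring
        try simp
    have h1k : (1:ℝ) + gam (eAdd u v) ≠ 0 := by
      have := gam_pos _ hwlt; linarith
    have hSw : (gam (eAdd u v))^2 * (1 - (wa^2*‖u‖^2 + 2*wa*wb*t + wb^2*‖v‖^2)) = 1 := by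
      have h5 := gam_sq _ hwlt
      rw [hwn] at h5
      linear_combination h5
    have sww : boost (eAdd u v) * boost (eAdd u v) = F u v (2*(gam (eAdd u v))^2-1)
        (2*(gam (eAdd u v))^2*wa) (2*(gam (eAdd u v))^2*wb) (2*(gam (eAdd u v))^2*wa)
        (2*(gam (eAdd u v))^2*wb) 1 (2*(gam (eAdd u v))^2*(wa*wa)) (2*(gam (eAdd u v))^2*(wa*wb))
        (2*(gam (eAdd u v))^2*(wb*wa)) (2*(gam (eAdd u v))^2*(wb*wb)) := by
      rw [hbw]
      exact F_sq u v _ _ t (gam (eAdd u v)) wa wb _ hps hqs hts h1k (by field_simp) hSw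
    have swc : F u v (2*(gam (eAdd u v))^2-1)
        (2*(gam (eAdd u v))^2*wa) (2*(gam (eAdd u v))^2*wb) (2*(gam (eAdd u v))^2*wa)
        (2*(gam (eAdd u v))^2*wb) 1 (2*(gam (eAdd u v))^2*(wa*wa)) (2*(gam (eAdd u v))^2*(wa*wb))
        (2*(gam (eAdd u v))^2*(wb*wa)) (2*(gam (eAdd u v))^2*(wb*wb)) = F u v
        (2*(gam u)^2*(gam v)^2*(1+t)^2 - 1)
        (2*(gam u)^2*(gam v)^2*(1+t)*(1+gam u+gam u*t)/(1+gam u))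
        (2*gam u*(gam v)^2*(1+t))
        (2*(gam u)^2*(gam v)^2*(1+t)*(1+gam u+gam u*t)/(1+gam u))
        (2*gam u*(gam v)^2*(1+t))
        1
        (2*(gam u)^2*(gam v)^2*(1+gam u+gam u*t)^2/(1+gam u)^2)
        (2*gam u*(gam v)^2*(1+gam u+gam u*t)/(1+gam u))
        (2*gam u*(gam v)^2*(1+gam u+gam u*t)/(1+gam u))
        (2*(gam v)^2) := by
      refine F_congr ?_ ?_ ?_ ?_ ?_ ?_ ?_ ?_ ?_ ?_ <;>
      · try simp only [hk, hwa, hwb]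
        try field_simp
        try ring
    rw [pow_two, pow_two, sww, swc, s3]

  have hSb : S = boost (eAdd u v) := by
    open scoped MatrixOrder in
    exact (CFC.sq_eq_sq_iff S _ (Matrix.nonneg_iff_posSemidef.2 hS)
      (Matrix.nonneg_iff_posSemidef.2 (boost_posSemidef _ hwlt))).1 (by rw [hSsq, hKey])
  rw [hSb, trace_boost _ hwlt]
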